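/- A topological Brandt λ⁰-extension B⁰_λ(S) of a topological monoid (S,τ) with zero is compact if and only if the cardinal λ ≥ 1 is finite and (S,τ) is compact. -/

import Mathlib

attribute [local instance] Classical.propDecidable

/-- The Brandt `λ⁰`-extension of a semigroup `S` with zero, with index set `I`:
its elements are `0` (encoded `none`) and triples `(α, s, β)` with `s ≠ 0`. -/
def Brandt (I S : Type*) [Zero S] : Type _ := Option (I × {s : S // s ≠ 0} × I)

instance brandtZero {I S : Type*} [Zero S] : Zero (Brandt I S) := ⟨none⟩

/-- Multiplication on the Brandt `λ⁰`-extension. -/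
noncomputable def brandtMul {I S : Type*} [Zero S] [Mul S] :
    Brandt I S → Brandt I S → Brandt I S
  | some (α, a, β), some (γ, b, δ) =>
      if h : β = γ ∧ a.1 * b.1 ≠ 0 then some (α, ⟨a.1 * b.1, h.2⟩, δ) else none
  | _, _ => none

noncomputable instance brandtMulInst {I S : Type*} [Zero S] [Mul S] :
    Mul (Brandt I S) := ⟨brandtMul⟩

/-- The semigroup of `I × I`-matrix units. -/
def MatrixUnits (I : Type*) := Option (I × I)

instance muZero {I : Type*} : Zero (MatrixUnits I) := ⟨none⟩

noncomputable instance muMul {I : Type*} : Mul (MatrixUnits I) :=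
  ⟨fun x y => match x, y with
    | some (a, b), some (c, d) => if b = c then some (a, d) else none
    | _, _ => none⟩

/-- The subset of `Brandt I S` induced by a subset `T ⊆ S`
(the Brandt extension of `T` inside that of `S`). -/
def brandtSet {I S : Type*} [Zero S] (T : Set S) : Set (Brandt I S) :=
  {z | z = 0 ∨ ∃ (α β : I) (s : {s : S // s ≠ 0}), s.1 ∈ T ∧ z = some (α, s, β)}

/-- The map `B⁰_{λ₁}(S) → B⁰_{λ₂}(T)` induced by `h : S → T`, an index map `φ`
and families `u`, `v` (`v` playing the role of `a ↦ u(a)⁻¹`):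
`(α,s,β) ↦ (φ α, u α · h s · v β, φ β)` when the middle entry is nonzero, else `0`. -/
noncomputable def brandtHomMap {I₁ I₂ S T : Type*} [Zero S] [Zero T] [Mul T]
    (φ : I₁ → I₂) (u v : I₁ → T) (h : S → T) : Brandt I₁ S → Brandt I₂ T
  | some (a, s, b) =>
      if hh : u a * h s.1 * v b ≠ 0 then
        some (φ a, ⟨u a * h s.1 * v b, hh⟩, φ b) else none
  | none => none

/-- The canonical copy of `S` in `Brandt I S` at index `α` (the set `S_{α,α}`). -/
noncomputable def brandtIncl {I S : Type*} [Zero S] (α : I) : S → Brandt I S :=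
  fun s => if h : s = 0 then 0 else some (α, ⟨s, h⟩, α)

/-- The non-zero element `(α, s, β)` of `Brandt I S`. -/
def brandtElt {I S : Type*} [Zero S] (α : I) (s : {s : S // s ≠ 0}) (β : I) :
    Brandt I S := some (α, s, β)

section BrandtAux

variable {I S : Type*} [MonoidWithZero S]

lemma brandt_zero_mul (z : Brandt I S) : (0 : Brandt I S) * z = 0 := by
  cases z <;> rfl

lemma brandt_mul_zero (z : Brandt I S) : z * (0 : Brandt I S) = 0 := by
  cases z <;> rfl

lemma brandt_elt_mul (a : I) (s : {s : S // s ≠ 0}) (b c : I)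
    (t : {s : S // s ≠ 0}) (d : I) :
    brandtElt a s b * brandtElt c t d =
      if h : b = c ∧ s.1 * t.1 ≠ 0 then brandtElt a ⟨s.1 * t.1, h.2⟩ d else 0 := rfl

lemma e_mul_elt (h1 : (1 : S) ≠ 0) (m n b : I) (s : {s : S // s ≠ 0}) (c : I) :
    brandtElt m ⟨1, h1⟩ n * brandtElt b s c =
      if n = b then brandtElt m s c else 0 := by
  rw [brandt_elt_mul]
  by_cases h : n = b
  · have hs : (1 : S) * s.1 ≠ 0 := by rw [one_mul]; exact s.2
    rw [dif_pos ⟨h, hs⟩, if_pos h]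
    exact congrArg (fun t => brandtElt m t c) (Subtype.ext (one_mul s.1))
  · rw [dif_neg (fun hh => h hh.1), if_neg h]

lemma elt_mul_e (h1 : (1 : S) ≠ 0) (b : I) (s : {s : S // s ≠ 0}) (c m n : I) :
    brandtElt b s c * brandtElt m ⟨1, h1⟩ n =
      if c = m then brandtElt b s n else 0 := by
  rw [brandt_elt_mul]
  by_cases h : c = m
  · have hs : s.1 * (1 : S) ≠ 0 := by rw [mul_one]; exact s.2
    rw [dif_pos ⟨h, hs⟩, if_pos h]
    exact congrArg (fun t => brandtElt b t n) (Subtype.ext (mul_one s.1))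
  · rw [dif_neg (fun hh => h hh.1), if_neg h]

lemma brandt_elt_ne_zero (a : I) (s : {s : S // s ≠ 0}) (b : I) :
    brandtElt a s b ≠ 0 := fun h => Option.some_ne_none _ h

end BrandtAux

/-- A topological Brandt `λ⁰`-extension `B⁰_λ(S)` of a topological
monoid `(S,τ)` with zero is compact iff `λ` is finite and `(S,τ)` is compact. -/
theorem brandt_compact_iff {I S : Type*} [MonoidWithZero S]
    [TopologicalSpace S] [ContinuousMul S] [Nonempty I]
    (h1 : (1 : S) ≠ 0)
    [TopologicalSpace (Brandt I S)] [ContinuousMul (Brandt I S)]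
    [T2Space (Brandt I S)]
    (α : I) (hemb : Topology.IsEmbedding (brandtIncl (I := I) (S := S) α)) :
    CompactSpace (Brandt I S) ↔ (Finite I ∧ CompactSpace S) := by
  set eα : Brandt I S := brandtElt α ⟨1, h1⟩ α with heα
  constructor
  · intro hc
    constructor
    · -- `I` is finite: matrix units argument
      by_contra hfin
      have hIinf : Infinite I := not_finite_iff_infinite.mp hfin
      set 𝒰 : Ultrafilter I := Filter.hyperfilter I with h𝒰
      have hle : (𝒰 : Filter I) ≤ Filter.cofinite := Filter.hyperfilter_le_cofinite
      have hinf : ∀ s ∈ 𝒰, s.Infinite := by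
        intro s hs
        by_contra hfin'
        rw [Set.not_infinite] at hfin'
        have hcmem : sᶜ ∈ 𝒰 := hle (by simp [Filter.mem_cofinite, hfin'])
        exact (Ultrafilter.compl_mem_iff_notMem.mp hcmem) hs
      set g : I → Brandt I S := fun δ => brandtElt α ⟨1, h1⟩ δ with hg
      set f : I → Brandt I S := fun δ => brandtElt δ ⟨1, h1⟩ α with hf
      obtain ⟨x, -, hx⟩ := hc.isCompact_univ.ultrafilter_le_nhds (𝒰.map g)
        (Filter.le_principal_iff.mpr Filter.univ_mem)
      obtain ⟨y, -, hy⟩ := hc.isCompact_univ.ultrafilter_le_nhds (𝒰.map f)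
        (Filter.le_principal_iff.mpr Filter.univ_mem)
      have hgx : Filter.Tendsto g (𝒰 : Filter I) (nhds x) := hx
      have hfy : Filter.Tendsto f (𝒰 : Filter I) (nhds y) := hy
      have hconst : ∀ δ : I, g δ * f δ = eα := by
        intro δ
        rw [hg, hf, heα]
        rw [e_mul_elt h1, if_pos rfl]
      have htend : Filter.Tendsto (fun δ => g δ * f δ) (𝒰 : Filter I)
          (nhds (x * y)) := hgx.mul hfy
      have hxy : x * y = eα := by
        have h' : Filter.Tendsto (fun _ : I => eα) (𝒰 : Filter I) (nhds (x * y)) := by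
          simpa only [hconst] using htend
        exact tendsto_nhds_unique h' tendsto_const_nhds
      have hzero : ∀ W ∈ nhds (x * y), (0 : Brandt I S) ∈ W := by
        intro W hW
        have hcm : Filter.Tendsto (fun p : Brandt I S × Brandt I S => p.1 * p.2)
            (nhds (x, y)) (nhds (x * y)) := continuous_mul.tendsto (x, y)
        have hW2 : (fun p : Brandt I S × Brandt I S => p.1 * p.2) ⁻¹' W ∈ nhds (x, y) := hcm hW
        rw [mem_nhds_prod_iff] at hW2
        obtain ⟨U, hU, V, hV, hUV⟩ := hW2
        have hA : g ⁻¹' U ∈ 𝒰 := hgx hU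
        have hB : f ⁻¹' V ∈ 𝒰 := hfy hV
        obtain ⟨δ, hδ⟩ := (hinf _ hA).nonempty
        obtain ⟨δ', hδ'B, hδ'ne⟩ : ∃ δ', δ' ∈ f ⁻¹' V ∧ δ' ≠ δ := by
          obtain ⟨δ', hδ'⟩ := ((hinf _ hB).diff (Set.finite_singleton δ)).nonempty
          exact ⟨δ', hδ'.1, by simpa using hδ'.2⟩
        have h0 : g δ * f δ' = 0 := by
          rw [hg, hf, brandt_elt_mul, dif_neg (fun hh => hδ'ne hh.1.symm)]
        have : (g δ, f δ') ∈ U ×ˢ V := ⟨hδ, hδ'B⟩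
        have := hUV this
        rwa [Set.mem_preimage, h0] at this
      have hne : x * y ≠ 0 := by rw [hxy]; exact brandt_elt_ne_zero _ _ _
      have hopen : IsOpen ({(0 : Brandt I S)}ᶜ) := isClosed_singleton.isOpen_compl
      have := hzero _ (hopen.mem_nhds (by simpa using hne))
      simp at this
    · -- `S` is compact
      have hφcont : Continuous (fun z : Brandt I S => eα * z * eα) :=
        (continuous_const.mul continuous_id).mul continuous_const
      have hK : IsCompact ((fun z : Brandt I S => eα * z * eα) '' Set.univ) :=
        hc.isCompact_univ.image hφcont
      have him : (fun z : Brandt I S => eα * z * eα) '' Set.univ =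
          Set.range (brandtIncl (I := I) (S := S) α) := by
        rw [Set.image_univ]
        ext z
        constructor
        · rintro ⟨w, rfl⟩
          cases w with
          | none =>
            refine ⟨0, ?_⟩
            show brandtIncl α 0 = eα * (0 : Brandt I S) * eα
            rw [brandt_mul_zero, brandt_zero_mul]
            exact dif_pos rfl
          | some t =>
            obtain ⟨b, s, c⟩ := t
            show ∃ u, brandtIncl α u = eα * brandtElt b s c * eα
            rw [heα, e_mul_elt h1]
            by_cases hb : α = b
            · rw [if_pos hb, elt_mul_e h1]
              by_cases hcα : c = α
              · rw [if_pos hcα]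
                exact ⟨s.1, dif_neg s.2⟩
              · rw [if_neg hcα]
                exact ⟨0, dif_pos rfl⟩
            · rw [if_neg hb, brandt_zero_mul]
              exact ⟨0, dif_pos rfl⟩
        · rintro ⟨t, rfl⟩
          by_cases ht : t = 0
          · subst ht
            refine ⟨0, ?_⟩
            show eα * (0 : Brandt I S) * eα = brandtIncl α 0
            rw [brandt_mul_zero, brandt_zero_mul]
            symm
            exact dif_pos rfl
          · refine ⟨brandtElt α ⟨t, ht⟩ α, ?_⟩
            show eα * brandtElt α ⟨t, ht⟩ α * eα = brandtIncl α t
            rw [heα, e_mul_elt h1, if_pos rfl, elt_mul_e h1, if_pos rfl]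
            symm
            exact dif_neg ht
      rw [← isCompact_univ_iff, hemb.isCompact_iff, Set.image_univ, ← him]
      exact hK
  · rintro ⟨hI, hS⟩
    have hK : IsCompact (Set.range (brandtIncl (I := I) (S := S) α)) := by
      rw [← Set.image_univ]
      exact hS.isCompact_univ.image hemb.continuous
    have key : IsCompact (⋃ p : I × I,
        (fun z : Brandt I S => brandtElt p.1 ⟨1, h1⟩ α * z * brandtElt α ⟨1, h1⟩ p.2) ''
          Set.range (brandtIncl (I := I) (S := S) α)) :=
      isCompact_iUnion fun p =>
        hK.image ((continuous_const.mul continuous_id).mul continuous_const)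
    have huniv : (Set.univ : Set (Brandt I S)) ⊆ ⋃ p : I × I,
        (fun z : Brandt I S => brandtElt p.1 ⟨1, h1⟩ α * z * brandtElt α ⟨1, h1⟩ p.2) ''
          Set.range (brandtIncl (I := I) (S := S) α) := by
      intro z _
      rw [Set.mem_iUnion]
      cases z with
      | none =>
        refine ⟨(α, α), 0, ⟨0, dif_pos rfl⟩, ?_⟩
        show brandtElt α ⟨1, h1⟩ α * (0 : Brandt I S) * brandtElt α ⟨1, h1⟩ α = none
        rw [brandt_mul_zero, brandt_zero_mul]
        rfl
      | some t =>
        obtain ⟨b, s, c⟩ := t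
        refine ⟨(b, c), brandtElt α s α, ⟨s.1, dif_neg s.2⟩, ?_⟩
        show brandtElt b ⟨1, h1⟩ α * brandtElt α s α * brandtElt α ⟨1, h1⟩ c = some (b, s, c)
        rw [e_mul_elt h1, if_pos rfl, elt_mul_e h1, if_pos rfl]
        rfl
    rw [← isCompact_univ_iff, ← Set.univ_subset_iff.mp huniv]
    exact key
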